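/- Let a, b, c, d be affinely independent points of EuclideanSpace ℝ (Fin 3). Then there exists a vertex v ∈ {a,b,c,d} such that, writing F for the face opposite v (the triangle on the other three vertices), for every vertex w of F, letting x and y be the two remaining vertices of F, one has ∠ v w x + ∠ v w y ≤ π. (Equivalently: some face of the tetrahedron has all three of its 'exterior' angle-pairs summing to at most π, so its boundary is a simple closed quasigeodesic through three vertices.) -/

import Mathlib

open Real InnerProductGeometry
open scoped RealInnerProductSpace

section vec
variable {V : Type*} [NormedAddCommGroup V] [InnerProductSpace ℝ V]

lemma my_gram (u v w : V) (hu : ⟪u,u⟫ = 1) (hv : ⟪v,v⟫ = 1) (hw : ⟪w,w⟫ = 1) :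
    0 ≤ 1 + 2*(⟪u,v⟫*⟪v,w⟫*⟪u,w⟫) - ⟪u,v⟫^2 - ⟪v,w⟫^2 - ⟪u,w⟫^2 := by
  have cs := real_inner_mul_inner_self_le (u - ⟪u,v⟫ • v) (w - ⟪v,w⟫ • v)
  have e1 : ⟪v,u⟫ = ⟪u,v⟫ := real_inner_comm _ _
  have e2 : ⟪w,v⟫ = ⟪v,w⟫ := real_inner_comm _ _
  have e3 : ⟪w,u⟫ = ⟪u,w⟫ := real_inner_comm _ _
  simp only [inner_sub_left, inner_sub_right, real_inner_smul_left, real_inner_smul_right,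
    e1, e2, e3, hu, hv, hw] at cs
  nlinarith [cs]

lemma my_angle_triangle (x y z : V) : angle x z ≤ angle x y + angle y z := by
  rcases eq_or_ne x 0 with rfl|hx
  · rw [angle_zero_left, angle_zero_left]; linarith [angle_nonneg y z]
  rcases eq_or_ne y 0 with rfl|hy
  · rw [angle_zero_right, angle_zero_left]; linarith [angle_le_pi x z]
  rcases eq_or_ne z 0 with rfl|hz
  · rw [angle_zero_right, angle_zero_right]; linarith [angle_nonneg x y]
  set u : V := ‖x‖⁻¹ • x with hu
  set v : V := ‖y‖⁻¹ • y with hv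
  set w : V := ‖z‖⁻¹ • z with hw
  have hxp : (0:ℝ) < ‖x‖⁻¹ := inv_pos.2 (norm_pos_iff.2 hx)
  have hyp : (0:ℝ) < ‖y‖⁻¹ := inv_pos.2 (norm_pos_iff.2 hy)
  have hzp : (0:ℝ) < ‖z‖⁻¹ := inv_pos.2 (norm_pos_iff.2 hz)
  have hnu : ‖u‖ = 1 := norm_smul_inv_norm hx
  have hnv : ‖v‖ = 1 := norm_smul_inv_norm hy
  have hnw : ‖w‖ = 1 := norm_smul_inv_norm hz
  have exy : angle x y = angle u v := by
    rw [hu, hv, angle_smul_left_of_pos _ _ hxp, angle_smul_right_of_pos _ _ hyp]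
  have eyz : angle y z = angle v w := by
    rw [hv, hw, angle_smul_left_of_pos _ _ hyp, angle_smul_right_of_pos _ _ hzp]
  have exz : angle x z = angle u w := by
    rw [hu, hw, angle_smul_left_of_pos _ _ hxp, angle_smul_right_of_pos _ _ hzp]
  rw [exy, eyz, exz]
  set A := angle u v
  set B := angle v w
  set C := angle u w
  have hA0 : 0 ≤ A := angle_nonneg u v
  have hB0 : 0 ≤ B := angle_nonneg v w
  have hC0 : 0 ≤ C := angle_nonneg u w
  have hApi : A ≤ π := angle_le_pi u v
  have hBpi : B ≤ π := angle_le_pi v w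
  have hCpi : C ≤ π := angle_le_pi u w
  rcases le_or_gt π (A + B) with hple|hple
  · linarith
  have hcA : Real.cos A = ⟪u,v⟫ := by rw [cos_angle, hnu, hnv]; norm_num
  have hcB : Real.cos B = ⟪v,w⟫ := by rw [cos_angle, hnv, hnw]; norm_num
  have hcC : Real.cos C = ⟪u,w⟫ := by rw [cos_angle, hnu, hnw]; norm_num
  have gram := my_gram u v w (by rw [real_inner_self_eq_norm_sq, hnu]; norm_num)
    (by rw [real_inner_self_eq_norm_sq, hnv]; norm_num)
    (by rw [real_inner_self_eq_norm_sq, hnw]; norm_num)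
  rw [← hcA, ← hcB, ← hcC] at gram
  by_contra hcon
  push_neg at hcon
  have hkey : Real.cos C < Real.cos (A + B) :=
    Real.cos_lt_cos_of_nonneg_of_le_pi (by linarith) hCpi hcon
  rw [Real.cos_add] at hkey
  have hsA : Real.sin A ^ 2 = 1 - Real.cos A ^ 2 := Real.sin_sq A
  have hsB : Real.sin B ^ 2 = 1 - Real.cos B ^ 2 := Real.sin_sq B
  have hsA0 : 0 ≤ Real.sin A := Real.sin_nonneg_of_nonneg_of_le_pi hA0 hApi
  have hsB0 : 0 ≤ Real.sin B := Real.sin_nonneg_of_nonneg_of_le_pi hB0 hBpi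
  have hprod : (Real.sin A * Real.sin B)^2 = (1 - Real.cos A ^2) * (1 - Real.cos B ^2) := by
    rw [mul_pow, hsA, hsB]
  -- cos C < cos A cos B - sin A sin B, so  t := cosA cosB - cos C > sinA sinB ≥ 0
  nlinarith [gram, hprod, mul_nonneg hsA0 hsB0, sq_nonneg (Real.sin A * Real.sin B - (Real.cos A * Real.cos B - Real.cos C))]

end vec

open EuclideanGeometry Real

namespace QuasiGeoAux

variable {P : Type*} [MetricSpace P] [NormedAddTorsor (EuclideanSpace ℝ (Fin 3)) P]

lemma angle_le_add' (p1 p2 p3 q : P) : ∠ p1 p2 q ≤ ∠ p1 p2 p3 + ∠ p3 p2 q :=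
  my_angle_triangle (p1 -ᵥ p2) (p3 -ᵥ p2) (q -ᵥ p2)

lemma lemL (u x y z : P) (hxu : x ≠ u) (hyu : y ≠ u) (hzu : z ≠ u)
    (hyx : y ≠ x) (hzx : z ≠ x) :
    ∠ u y x + ∠ u z y + ∠ u x z ≤ 2 * π := by
  have t1 := EuclideanGeometry.angle_add_angle_add_angle_eq_pi (p₁ := u) y hxu
  have t2 := EuclideanGeometry.angle_add_angle_add_angle_eq_pi (p₁ := u) z hyu
  have t3 := EuclideanGeometry.angle_add_angle_add_angle_eq_pi (p₁ := u) x hzu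
  have t4 := EuclideanGeometry.angle_add_angle_add_angle_eq_pi (p₁ := x) z hyx
  have i1 : ∠ x y u ≤ ∠ x y z + ∠ z y u := angle_le_add' x y z u
  have i2 : ∠ y z u ≤ ∠ y z x + ∠ x z u := angle_le_add' y z x u
  have i3 : ∠ z x u ≤ ∠ z x y + ∠ y x u := angle_le_add' z x y u
  have c1 : ∠ u y x = ∠ x y u := angle_comm u y x
  have c2 : ∠ u z y = ∠ y z u := angle_comm u z y
  have c3 : ∠ u x z = ∠ z x u := angle_comm u x z
  have c4 : ∠ z y u = ∠ u y z := angle_comm z y u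
  have c5 : ∠ x z u = ∠ u z x := angle_comm x z u
  have c6 : ∠ y x u = ∠ u x y := angle_comm y x u
  have c7 : ∠ y z x = ∠ x z y := angle_comm y z x
  have c8 : ∠ z x y = ∠ y x z := angle_comm z x y
  have n1 := EuclideanGeometry.angle_nonneg y u x
  have n2 := EuclideanGeometry.angle_nonneg z u y
  have n3 := EuclideanGeometry.angle_nonneg x u z
  linarith

end QuasiGeoAux

set_option maxHeartbeats 4000000 in
/-- Every tetrahedron has a vertex `v` such that the face opposite `v`
has all three "exterior" angle pairs summing to at most `π`, so its
boundary is a simple closed quasigeodesic through three vertices. -/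
theorem exists_face_quasigeodesic
    (a b c d : EuclideanSpace ℝ (Fin 3))
    (h : AffineIndependent ℝ ![a, b, c, d]) :
    (∠ a b c + ∠ a b d ≤ π ∧ ∠ a c b + ∠ a c d ≤ π ∧ ∠ a d b + ∠ a d c ≤ π) ∨
    (∠ b a c + ∠ b a d ≤ π ∧ ∠ b c a + ∠ b c d ≤ π ∧ ∠ b d a + ∠ b d c ≤ π) ∨
    (∠ c a b + ∠ c a d ≤ π ∧ ∠ c b a + ∠ c b d ≤ π ∧ ∠ c d a + ∠ c d b ≤ π) ∨
    (∠ d a b + ∠ d a c ≤ π ∧ ∠ d b a + ∠ d b c ≤ π ∧ ∠ d c a + ∠ d c b ≤ π) := by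
  have hinj := h.injective
  have key : ∀ i j : Fin 4, i ≠ j → ![a,b,c,d] i ≠ ![a,b,c,d] j := fun i j hij => hinj.ne hij
  have hab : a ≠ b := by simpa using key 0 1 (by decide)
  have hac : a ≠ c := by simpa using key 0 2 (by decide)
  have had : a ≠ d := by simpa using key 0 3 (by decide)
  have hbc : b ≠ c := by simpa using key 1 2 (by decide)
  have hbd : b ≠ d := by simpa using key 1 3 (by decide)
  have hcd : c ≠ d := by simpa using key 2 3 (by decide)
  have La1 := QuasiGeoAux.lemL a b c d hab.symm hac.symm had.symm hbc.symm hbd.symm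
  have La2 := QuasiGeoAux.lemL a b d c hab.symm had.symm hac.symm hbd.symm hbc.symm
  have Lb1 := QuasiGeoAux.lemL b a c d hab hbc.symm hbd.symm hac.symm had.symm
  have Lb2 := QuasiGeoAux.lemL b a d c hab hbd.symm hbc.symm had.symm hac.symm
  have Lc1 := QuasiGeoAux.lemL c a b d hac hbc hcd.symm hab.symm had.symm
  have Lc2 := QuasiGeoAux.lemL c a d b hac hcd.symm hbc had.symm hab.symm
  have Ld1 := QuasiGeoAux.lemL d a b c had hbd hcd hab.symm hac.symm
  have Ld2 := QuasiGeoAux.lemL d a c b had hcd hbd hac.symm hab.symm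
  have T1 := EuclideanGeometry.angle_add_angle_add_angle_eq_pi (p₁ := a) c hab.symm
  have T2 := EuclideanGeometry.angle_add_angle_add_angle_eq_pi (p₁ := a) d hab.symm
  have T3 := EuclideanGeometry.angle_add_angle_add_angle_eq_pi (p₁ := a) d hac.symm
  have T4 := EuclideanGeometry.angle_add_angle_add_angle_eq_pi (p₁ := b) d hbc.symm
  have e1 : ∠ a b c = ∠ c b a := angle_comm _ _ _
  have e2 : ∠ a b d = ∠ d b a := angle_comm _ _ _
  have e3 : ∠ a c b = ∠ b c a := angle_comm _ _ _
  have e4 : ∠ a c d = ∠ d c a := angle_comm _ _ _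
  have e5 : ∠ a d b = ∠ b d a := angle_comm _ _ _
  have e6 : ∠ a d c = ∠ c d a := angle_comm _ _ _
  have e7 : ∠ b a c = ∠ c a b := angle_comm _ _ _
  have e8 : ∠ b a d = ∠ d a b := angle_comm _ _ _
  have e9 : ∠ b c d = ∠ d c b := angle_comm _ _ _
  have e10 : ∠ b d c = ∠ c d b := angle_comm _ _ _
  have e11 : ∠ c a d = ∠ d a c := angle_comm _ _ _
  have e12 : ∠ c b d = ∠ d b c := angle_comm _ _ _
  have n1 := EuclideanGeometry.angle_nonneg a b c
  have n2 := EuclideanGeometry.angle_nonneg a b d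
  have n3 := EuclideanGeometry.angle_nonneg a c b
  have n4 := EuclideanGeometry.angle_nonneg a c d
  have n5 := EuclideanGeometry.angle_nonneg a d b
  have n6 := EuclideanGeometry.angle_nonneg a d c
  have n7 := EuclideanGeometry.angle_nonneg b a c
  have n8 := EuclideanGeometry.angle_nonneg b a d
  have n9 := EuclideanGeometry.angle_nonneg b c d
  have n10 := EuclideanGeometry.angle_nonneg b d c
  have n11 := EuclideanGeometry.angle_nonneg c a d
  have n12 := EuclideanGeometry.angle_nonneg c b d
  by_contra hcon
  push_neg at hcon
  obtain ⟨h1, h2, h3, h4⟩ := hcon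
  have Ha : π < ∠ a b c + ∠ a b d ∨ π < ∠ a c b + ∠ a c d ∨ π < ∠ a d b + ∠ a d c := by
    rcases lt_or_ge π (∠ a b c + ∠ a b d) with hh|hh
    · exact Or.inl hh
    rcases lt_or_ge π (∠ a c b + ∠ a c d) with hh'|hh'
    · exact Or.inr (Or.inl hh')
    exact Or.inr (Or.inr (h1 hh hh'))
  have Hb : π < ∠ b a c + ∠ b a d ∨ π < ∠ b c a + ∠ b c d ∨ π < ∠ b d a + ∠ b d c := by
    rcases lt_or_ge π (∠ b a c + ∠ b a d) with hh|hh
    · exact Or.inl hh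
    rcases lt_or_ge π (∠ b c a + ∠ b c d) with hh'|hh'
    · exact Or.inr (Or.inl hh')
    exact Or.inr (Or.inr (h2 hh hh'))
  have Hc : π < ∠ c a b + ∠ c a d ∨ π < ∠ c b a + ∠ c b d ∨ π < ∠ c d a + ∠ c d b := by
    rcases lt_or_ge π (∠ c a b + ∠ c a d) with hh|hh
    · exact Or.inl hh
    rcases lt_or_ge π (∠ c b a + ∠ c b d) with hh'|hh'
    · exact Or.inr (Or.inl hh')
    exact Or.inr (Or.inr (h3 hh hh'))
  have Hd : π < ∠ d a b + ∠ d a c ∨ π < ∠ d b a + ∠ d b c ∨ π < ∠ d c a + ∠ d c b := by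
    rcases lt_or_ge π (∠ d a b + ∠ d a c) with hh|hh
    · exact Or.inl hh
    rcases lt_or_ge π (∠ d b a + ∠ d b c) with hh'|hh'
    · exact Or.inr (Or.inl hh')
    exact Or.inr (Or.inr (h4 hh hh'))
  rcases Ha with hA|hA|hA <;> rcases Hb with hB|hB|hB <;> rcases Hc with hC|hC|hC <;>
    rcases Hd with hD|hD|hD <;> linarith
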